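/- Let R = F_1 × ⋯ × F_n be a finite direct product of fields with n ≥ 3. Then in EG(R), the maximum vertex degree is 2^{n−1} − 1, and it is attained exactly at the n vertices of the form (0) × ⋯ × F_i × ⋯ × (0). -/

import Mathlib

/-- An ideal is essential if it intersects every nonzero ideal nontrivially. -/
def IsEssentialIdeal (R : Type*) [CommRing R] (E : Ideal R) : Prop :=
  ∀ J : Ideal R, J ≠ ⊥ → E ⊓ J ≠ ⊥

/-- Vertices of the essential annihilating-ideal graph: nonzero ideals with
nonzero annihilator. -/
def AnnVertex (R : Type*) [CommRing R] : Type _ :=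
  {I : Ideal R // I ≠ ⊥ ∧ Submodule.annihilator I ≠ ⊥}

/-- The essential annihilating-ideal graph `EG(R)`. -/
def EG (R : Type*) [CommRing R] : SimpleGraph (AnnVertex R) where
  Adj I J := I ≠ J ∧ IsEssentialIdeal R (Submodule.annihilator (I.1 * J.1))
  symm := by
    constructor
    intro I J h
    refine ⟨h.1.symm, ?_⟩
    rw [mul_comm]
    exact h.2
  loopless := by constructor; intro I h; exact h.1 rfl

open Classical in
section
variable {n : ℕ} (F : Fin n → Type*) [∀ i, Field (F i)]

/-- The ideal of functions vanishing outside `S`. -/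
def idl (S : Finset (Fin n)) : Ideal (∀ i, F i) where
  carrier := {x | ∀ i ∉ S, x i = 0}
  add_mem' := fun hx hy i hi => by simp [Pi.add_apply, hx i hi, hy i hi]
  zero_mem' := fun i _ => rfl
  smul_mem' := fun c x hx i hi => by simp [smul_eq_mul, Pi.mul_apply, hx i hi]

variable {F}

lemma mem_idl {S : Finset (Fin n)} {x : ∀ i, F i} : x ∈ idl F S ↔ ∀ i ∉ S, x i = 0 :=
  Iff.rfl

lemma single_ne_zero' (i : Fin n) : Pi.single i (1 : F i) ≠ 0 := by
  intro h
  have := congrFun h i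
  simp at this

lemma single_mem_idl {S : Finset (Fin n)} {i : Fin n} :
    Pi.single i (1 : F i) ∈ idl F S ↔ i ∈ S := by
  constructor
  · intro h
    by_contra hi
    have := h i hi
    simp at this
  · intro hi j hj
    have : j ≠ i := fun h => hj (h ▸ hi)
    simp [Pi.single_apply, this]

lemma idl_injective : Function.Injective (idl F) := by
  intro S T h
  ext i
  rw [← single_mem_idl (F := F), ← single_mem_idl (F := F), h]

lemma single_one_mem_of {I : Ideal (∀ i, F i)} {x : ∀ i, F i} (hx : x ∈ I) {i : Fin n}
    (hxi : x i ≠ 0) : Pi.single i (1 : F i) ∈ I := by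
  have : Pi.single i (x i)⁻¹ * x ∈ I := Ideal.mul_mem_left _ _ hx
  convert this using 1
  funext j
  rcases eq_or_ne j i with rfl | hj
  · simp [inv_mul_cancel₀ hxi]
  · simp [Pi.single_apply, hj]

lemma ideal_eq_idl (I : Ideal (∀ i, F i)) :
    ∃ S : Finset (Fin n), I = idl F S := by
  classical
  refine ⟨Finset.univ.filter (fun i => Pi.single i (1 : F i) ∈ I), le_antisymm ?_ ?_⟩
  · intro x hx i hi
    simp only [Finset.mem_filter, Finset.mem_univ, true_and] at hi
    by_contra hxi
    exact hi (single_one_mem_of hx hxi)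
  · intro x hx
    have hrep : x = ∑ i, Pi.single i (x i) := (Finset.univ_sum_single x).symm
    rw [hrep]
    refine Ideal.sum_mem _ fun i _ => ?_
    rcases eq_or_ne (x i) 0 with h0 | h0
    · simp [h0]
    · have hi : Pi.single i (1 : F i) ∈ I := by
        by_contra hni
        exact h0 (hx i (by simp [hni]))
      have : x * Pi.single i (1 : F i) ∈ I := Ideal.mul_mem_left _ _ hi
      convert this using 1
      funext j
      rcases eq_or_ne j i with rfl | hj
      · simp
      · simp [Pi.single_apply, hj]

lemma idl_inf (S T : Finset (Fin n)) : idl F S ⊓ idl F T = idl F (S ∩ T) := by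
  ext x
  simp only [Submodule.mem_inf, mem_idl, Finset.mem_inter]
  constructor
  · rintro ⟨h1, h2⟩ i hi
    by_cases hiS : i ∈ S
    · exact h2 i (fun hT => hi ⟨hiS, hT⟩)
    · exact h1 i hiS
  · intro h
    exact ⟨fun i hi => h i (fun hh => hi hh.1), fun i hi => h i (fun hh => hi hh.2)⟩

lemma idl_mul (S T : Finset (Fin n)) : idl F S * idl F T = idl F (S ∩ T) := by
  refine le_antisymm ((Ideal.mul_le_inf).trans (idl_inf S T).le) ?_
  intro x hx
  have hrep : x = ∑ i, Pi.single i (x i) := (Finset.univ_sum_single x).symm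
  rw [hrep]
  refine Ideal.sum_mem _ fun i _ => ?_
  rcases eq_or_ne (x i) 0 with h0 | h0
  · simp [h0]
  · have hi : i ∈ S ∩ T := by
      by_contra hni
      exact h0 (hx i hni)
    rw [Finset.mem_inter] at hi
    have h1 : Pi.single i (x i) ∈ idl F S := by
      intro j hj
      have : j ≠ i := fun h => hj (h ▸ hi.1)
      simp [Pi.single_apply, this]
    have h2 : Pi.single i (1 : F i) ∈ idl F T := single_mem_idl.2 hi.2
    have := Ideal.mul_mem_mul h1 h2
    convert this using 1
    funext j
    rcases eq_or_ne j i with rfl | hj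
    · simp
    · simp [Pi.single_apply, hj]

lemma ann_idl (S : Finset (Fin n)) :
    Submodule.annihilator (idl F S) = idl F Sᶜ := by
  ext r
  rw [Submodule.mem_annihilator]
  constructor
  · intro h i hi
    simp only [Finset.mem_compl, not_not] at hi
    have := congrFun (h (Pi.single i 1) (single_mem_idl.2 hi)) i
    simpa using this
  · intro h x hx
    funext j
    by_cases hj : j ∈ S
    · have : r j = 0 := h j (by simpa using hj)
      simp [smul_eq_mul, Pi.mul_apply, this]
    · simp [smul_eq_mul, Pi.mul_apply, hx j hj]

lemma idl_eq_bot {S : Finset (Fin n)} : idl F S = ⊥ ↔ S = ∅ := by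
  constructor
  · intro h
    by_contra hS
    obtain ⟨i, hi⟩ := Finset.nonempty_iff_ne_empty.2 hS
    have : Pi.single i (1 : F i) ∈ idl F S := single_mem_idl.2 hi
    rw [h, Ideal.mem_bot] at this
    exact single_ne_zero' i this
  · rintro rfl
    ext x
    simp only [mem_idl, Ideal.mem_bot]
    constructor
    · intro h; funext i; exact h i (by simp)
    · rintro rfl i _; rfl

lemma idl_univ : idl F (Finset.univ : Finset (Fin n)) = ⊤ := by
  ext x; simp [mem_idl]

lemma essential_idl {S : Finset (Fin n)} :
    IsEssentialIdeal (∀ i, F i) (idl F S) ↔ S = Finset.univ := by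
  constructor
  · intro h
    by_contra hS
    obtain ⟨j, hj⟩ : ∃ j, j ∉ S := by
      by_contra hc
      push_neg at hc
      exact hS (Finset.eq_univ_iff_forall.2 hc)
    have h1 : idl F {j} ≠ (⊥ : Ideal (∀ i, F i)) := by
      rw [Ne, idl_eq_bot]; simp
    have := h (idl F {j}) h1
    rw [idl_inf] at this
    apply this
    rw [idl_eq_bot]
    ext k
    simp only [Finset.mem_inter, Finset.mem_singleton, Finset.notMem_empty, iff_false]
    rintro ⟨hk, rfl⟩
    exact hj hk
  · rintro rfl J hJ
    rw [idl_univ, top_inf_eq]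
    exact hJ

end
section
variable {n : ℕ} {F : Fin n → Type*} [∀ i, Field (F i)]

lemma vertex_spec (v : AnnVertex (∀ i, F i)) :
    ∃ S : Finset (Fin n), v.1 = idl F S ∧ S ≠ ∅ ∧ S ≠ Finset.univ := by
  obtain ⟨S, hS⟩ := ideal_eq_idl v.1
  refine ⟨S, hS, ?_, ?_⟩
  · intro h
    exact v.2.1 (hS.trans (idl_eq_bot.2 h))
  · intro h
    apply v.2.2
    rw [hS, ann_idl, idl_eq_bot, h, Finset.compl_univ]

lemma idl_vertex {S : Finset (Fin n)} (h1 : S ≠ ∅) (h2 : S ≠ Finset.univ) :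
    (idl F S ≠ ⊥) ∧ Submodule.annihilator (idl F S) ≠ ⊥ := by
  refine ⟨fun h => h1 (idl_eq_bot.1 h), ?_⟩
  rw [ann_idl, Ne, idl_eq_bot]
  intro h
  apply h2
  rwa [Finset.compl_eq_empty_iff] at h

lemma adj_iff {v w : AnnVertex (∀ i, F i)} {S T : Finset (Fin n)}
    (hv : v.1 = idl F S) (hw : w.1 = idl F T) (hS : S ≠ ∅) :
    (EG (∀ i, F i)).Adj v w ↔ S ∩ T = ∅ := by
  constructor
  · rintro ⟨_, hess⟩
    rw [hv, hw, idl_mul, ann_idl, essential_idl] at hess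
    rwa [Finset.compl_eq_univ_iff] at hess
  · intro hST
    refine ⟨?_, ?_⟩
    · intro he
      have hST' : S = T := idl_injective (by rw [← hv, he, hw])
      rw [hST', Finset.inter_self] at hST
      exact hS (hST'.trans hST)
    · rw [hv, hw, idl_mul, ann_idl, essential_idl, hST, Finset.compl_empty]

end
section
variable {n : ℕ} {F : Fin n → Type*} [∀ i, Field (F i)]

noncomputable def gfun (v : AnnVertex (∀ i, F i)) (T : Finset (Fin n)) :
    AnnVertex (∀ i, F i) :=
  if h : T ≠ ∅ ∧ T ≠ Finset.univ then ⟨idl F T, idl_vertex h.1 h.2⟩ else v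

lemma degree_eq (v : AnnVertex (∀ i, F i)) {S : Finset (Fin n)} (hv : v.1 = idl F S)
    (hS : S ≠ ∅) (hSu : S ≠ Finset.univ) :
    ((EG (∀ i, F i)).neighborSet v).ncard = 2 ^ (n - S.card) - 1 := by
  classical
  set A : Finset (Finset (Fin n)) := Sᶜ.powerset.erase ∅ with hA
  have hmemA : ∀ T, T ∈ A ↔ T ≠ ∅ ∧ T ⊆ Sᶜ := by
    intro T; simp [hA, Finset.mem_erase, Finset.mem_powerset]
  have hTne_univ : ∀ T ∈ A, T ≠ Finset.univ := by
    intro T hT h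
    obtain ⟨i, hi⟩ := Finset.nonempty_iff_ne_empty.2 hS
    have h2 := ((hmemA T).1 hT).2
    rw [h] at h2
    exact Finset.mem_compl.1 (h2 (Finset.mem_univ i)) hi
  have hdisj : ∀ T : Finset (Fin n), T ⊆ Sᶜ → S ∩ T = ∅ := by
    intro T hsub
    rw [Finset.eq_empty_iff_forall_notMem]
    intro i hi
    rw [Finset.mem_inter] at hi
    exact Finset.mem_compl.1 (hsub hi.2) hi.1
  have himg : (EG (∀ i, F i)).neighborSet v = gfun v '' ↑A := by
    ext w
    simp only [Set.mem_image, Finset.mem_coe, SimpleGraph.mem_neighborSet]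
    constructor
    · intro hadj
      obtain ⟨T, hw, hT1, hT2⟩ := vertex_spec w
      refine ⟨T, ?_, ?_⟩
      · rw [hmemA]
        refine ⟨hT1, ?_⟩
        have hST := (adj_iff hv hw hS).1 hadj
        intro i hi
        rw [Finset.mem_compl]
        intro hiS
        have : i ∈ S ∩ T := Finset.mem_inter.2 ⟨hiS, hi⟩
        rw [hST] at this
        exact Finset.notMem_empty i this
      · have hg : gfun v T = ⟨idl F T, idl_vertex hT1 hT2⟩ := dif_pos (And.intro hT1 hT2)
        rw [hg]
        exact Subtype.ext hw.symm
    · rintro ⟨T, hT, rfl⟩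
      have h12 := (hmemA T).1 hT
      have hTu := hTne_univ T hT
      have hg : gfun v T = ⟨idl F T, idl_vertex h12.1 hTu⟩ := dif_pos (And.intro h12.1 hTu)
      rw [hg]
      exact (adj_iff hv rfl hS).2 (hdisj T h12.2)
  rw [himg, Set.ncard_image_of_injOn, Set.ncard_coe_finset]
  · rw [hA, Finset.card_erase_of_mem (Finset.empty_mem_powerset _), Finset.card_powerset,
      Finset.card_compl, Fintype.card_fin]
  · intro T hT T' hT' h
    rw [Finset.mem_coe] at hT hT'
    have hg : gfun v T = ⟨idl F T, idl_vertex ((hmemA T).1 hT).1 (hTne_univ T hT)⟩ :=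
      dif_pos (And.intro ((hmemA T).1 hT).1 (hTne_univ T hT))
    have hg' : gfun v T' = ⟨idl F T', idl_vertex ((hmemA T').1 hT').1 (hTne_univ T' hT')⟩ :=
      dif_pos (And.intro ((hmemA T').1 hT').1 (hTne_univ T' hT'))
    rw [hg, hg'] at h
    exact idl_injective (congrArg Subtype.val h)

lemma idl_singleton (i : Fin n) : idl F {i} = Ideal.span {Pi.single i (1 : F i)} := by
  apply le_antisymm
  · intro x hx
    rw [Ideal.mem_span_singleton]
    refine ⟨x, ?_⟩
    funext j
    rcases eq_or_ne j i with rfl | hj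
    · simp
    · simp [Pi.single_apply, hj, hx j (by simp [hj])]
  · rw [Ideal.span_le]
    simp only [Set.singleton_subset_iff, SetLike.mem_coe]
    exact single_mem_idl.2 (Finset.mem_singleton_self i)

end

theorem maxDegree_in_product_of_fields {n : ℕ} (hn : 3 ≤ n)
    (F : Fin n → Type*) [∀ i, Field (F i)] :
    (∀ i : Fin n, ∃ v : AnnVertex (∀ i, F i), v.1 = Ideal.span {Pi.single i 1}) ∧
    (∀ v : AnnVertex (∀ i, F i),
      ((EG (∀ i, F i)).neighborSet v).ncard ≤ 2 ^ (n - 1) - 1) ∧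
    (∀ v : AnnVertex (∀ i, F i),
      ((EG (∀ i, F i)).neighborSet v).ncard = 2 ^ (n - 1) - 1 ↔
        ∃ i : Fin n, v.1 = Ideal.span {Pi.single i 1}) := by
  have hsing_ne_univ : ∀ i : Fin n, ({i} : Finset (Fin n)) ≠ Finset.univ := by
    intro i h
    have h1 : (Finset.univ : Finset (Fin n)).card = 1 := by rw [← h]; simp
    rw [Finset.card_univ, Fintype.card_fin] at h1
    omega
  have hsing_ne : ∀ i : Fin n, ({i} : Finset (Fin n)) ≠ ∅ := fun i => by simp
  refine ⟨?_, ?_, ?_⟩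
  · intro i
    exact ⟨⟨idl F {i}, idl_vertex (hsing_ne i) (hsing_ne_univ i)⟩, idl_singleton i⟩
  · intro v
    obtain ⟨S, hv, h1, h2⟩ := vertex_spec v
    rw [degree_eq v hv h1 h2]
    have hc1 : 1 ≤ S.card := Finset.card_pos.2 (Finset.nonempty_iff_ne_empty.2 h1)
    have hle : n - S.card ≤ n - 1 := by omega
    exact Nat.sub_le_sub_right (Nat.pow_le_pow_right (by norm_num) hle) 1
  · intro v
    obtain ⟨S, hv, h1, h2⟩ := vertex_spec v
    rw [degree_eq v hv h1 h2]
    constructor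
    · intro h
      have hp1 : 1 ≤ 2 ^ (n - S.card) := Nat.one_le_two_pow
      have hp2 : 1 ≤ 2 ^ (n - 1) := Nat.one_le_two_pow
      have hpow : 2 ^ (n - S.card) = 2 ^ (n - 1) := by omega
      have hexp : n - S.card = n - 1 := Nat.pow_right_injective (le_refl 2) hpow
      have hc1 : 1 ≤ S.card := Finset.card_pos.2 (Finset.nonempty_iff_ne_empty.2 h1)
      have hcle : S.card ≤ n := by
        have := Finset.card_le_card (Finset.subset_univ S)
        rwa [Finset.card_univ, Fintype.card_fin] at this
      have hone : S.card = 1 := by omega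
      obtain ⟨i, rfl⟩ := Finset.card_eq_one.1 hone
      exact ⟨i, hv.trans (idl_singleton i)⟩
    · rintro ⟨i, hi⟩
      have heq : idl F S = idl F {i} := by rw [← hv, hi, idl_singleton]
      rw [idl_injective heq]
      simp
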